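/- Let (P, ≤) be a partially ordered set and fix i, j ∈ P. Call a finite subset C ⊆ P a route from j to i if C is nonempty and totally ordered (a chain), i and j belong to C, and every c ∈ C satisfies j ≤ c ≤ i. Fix l, r ∈ P with r < l and such that no x ∈ P satisfies r < x < l. Call a route C (l,r)-fillable if C ∩ {l,r} ≠ ∅ and C ∪ {l,r} is again a route from j to i. Then: (1) the relation on (l,r)-fillable routes given by C ∼ C′ iff C \ {l,r} = C′ \ {l,r} is an equivalence relation whose equivalence classes are exactly the nonempty sets of the form {D ∪ {l}, D ∪ {r}, D ∪ {l,r}} ∩ {(l,r)-fillable routes} with D = C \ {l,r}; hence every route from j to i is either not (l,r)-fillable or belongs to exactly one such class; (2) the class of a fillable route C with D = C \ {l,r} has exactly 3 elements, namely D ∪ {l}, D ∪ {r}, D ∪ {l,r}, if l ≠ i and r ≠ j; exactly 2 elements, namely D ∪ {l} and D ∪ {l,r}, if l = i and r ≠ j; exactly 2 elements, namely D ∪ {r} and D ∪ {l,r}, if l ≠ i and r = j; and exactly 1 element, namely D ∪ {l,r}, if l = i and r = j. -/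

import Mathlib

/-- A finite subset `C` of a poset `P` is a *route* from `j` to `i` if it is a nonempty
chain containing `i` and `j`, all of whose elements `c` satisfy `j ≤ c ≤ i`. -/
def IsRoute {P : Type*} [PartialOrder P] (i j : P) (C : Finset P) : Prop :=
  C.Nonempty ∧ (∀ a ∈ C, ∀ b ∈ C, a ≤ b ∨ b ≤ a) ∧ i ∈ C ∧ j ∈ C ∧
    ∀ c ∈ C, j ≤ c ∧ c ≤ i

/-- A route `C` from `j` to `i` is *(l,r)-fillable* if `C ∩ {l,r} ≠ ∅` and
`C ∪ {l,r}` is again a route from `j` to `i`. -/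
def IsFillable {P : Type*} [PartialOrder P] [DecidableEq P]
    (i j l r : P) (C : Finset P) : Prop :=
  IsRoute i j C ∧ (l ∈ C ∨ r ∈ C) ∧ IsRoute i j (C ∪ {l, r})

/-- The equivalence class (chain) of an `(l,r)`-fillable route `C`: all fillable routes
`C'` with `C' \ {l,r} = C \ {l,r}`. -/
def routeClass {P : Type*} [PartialOrder P] [DecidableEq P]
    (i j l r : P) (C : Finset P) : Set (Finset P) :=
  {C' : Finset P | IsFillable i j l r C' ∧ C' \ {l, r} = C \ {l, r}}

section Aux
variable {P : Type*} [PartialOrder P] [DecidableEq P] (i j l r : P)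

lemma aux_union_eq (C : Finset P) : C ∪ {l, r} = C \ {l, r} ∪ {l, r} := by
  ext a
  simp only [Finset.mem_union, Finset.mem_sdiff, Finset.mem_insert, Finset.mem_singleton]
  tauto

lemma aux_fill_lr {C : Finset P} (hC : IsFillable i j l r C) :
    IsFillable i j l r (C \ {l, r} ∪ {l, r}) ∧
      (C \ {l, r} ∪ {l, r}) \ {l, r} = C \ {l, r} := by
  have h1 : (C \ {l, r} ∪ {l, r}) ∪ {l, r} = C \ {l, r} ∪ {l, r} := by
    ext a
    simp only [Finset.mem_union, Finset.mem_sdiff, Finset.mem_insert, Finset.mem_singleton]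
    tauto
  have hroute : IsRoute i j (C \ {l, r} ∪ {l, r}) := by
    rw [← aux_union_eq]; exact hC.2.2
  refine ⟨⟨hroute, Or.inl (by simp), by rw [h1]; exact hroute⟩, ?_⟩
  ext a
  simp only [Finset.mem_union, Finset.mem_sdiff, Finset.mem_insert, Finset.mem_singleton]
  tauto

lemma aux_fill_l {C : Finset P} (hlr : r < l) (hC : IsFillable i j l r C) (hrj : r ≠ j) :
    IsFillable i j l r (C \ {l, r} ∪ {l}) ∧
      (C \ {l, r} ∪ {l}) \ {l, r} = C \ {l, r} := by
  obtain ⟨-, -, hU⟩ := hC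
  obtain ⟨hNE, hch, hi, hj, hbd⟩ := hU
  have hsub : (C \ {l, r} ∪ {l} : Finset P) ⊆ C ∪ {l, r} := by
    intro a ha
    simp only [Finset.mem_union, Finset.mem_sdiff, Finset.mem_insert,
      Finset.mem_singleton] at ha ⊢
    tauto
  have hli : l ≤ i := (hbd l (by simp)).2
  have hir : i ≠ r := (hlr.trans_le hli).ne'
  have hjr : j ≠ r := hrj.symm
  have hi' : i = l ∨ i ∈ C ∨ i = r := by have h := hi; simp at h; tauto
  have hj' : j = l ∨ j ∈ C ∨ j = r := by have h := hj; simp at h; tauto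
  have hiU : i ∈ C \ {l, r} ∪ {l} := by
    simp only [Finset.mem_union, Finset.mem_sdiff, Finset.mem_insert, Finset.mem_singleton]
    tauto
  have hjU : j ∈ C \ {l, r} ∪ {l} := by
    simp only [Finset.mem_union, Finset.mem_sdiff, Finset.mem_insert, Finset.mem_singleton]
    tauto
  have hUeq : (C \ {l, r} ∪ {l}) ∪ {l, r} = C ∪ {l, r} := by
    ext a
    simp only [Finset.mem_union, Finset.mem_sdiff, Finset.mem_insert, Finset.mem_singleton]
    tauto
  refine ⟨⟨⟨⟨l, by simp⟩, fun a ha b hb => hch a (hsub ha) b (hsub hb), hiU, hjU,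
      fun c hc => hbd c (hsub hc)⟩, Or.inl (by simp), ?_⟩, ?_⟩
  · rw [hUeq]; exact ⟨hNE, hch, hi, hj, hbd⟩
  · ext a
    simp only [Finset.mem_union, Finset.mem_sdiff, Finset.mem_insert, Finset.mem_singleton]
    tauto

lemma aux_fill_r {C : Finset P} (hlr : r < l) (hC : IsFillable i j l r C) (hli : l ≠ i) :
    IsFillable i j l r (C \ {l, r} ∪ {r}) ∧
      (C \ {l, r} ∪ {r}) \ {l, r} = C \ {l, r} := by
  obtain ⟨-, -, hU⟩ := hC
  obtain ⟨hNE, hch, hi, hj, hbd⟩ := hU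
  have hsub : (C \ {l, r} ∪ {r} : Finset P) ⊆ C ∪ {l, r} := by
    intro a ha
    simp only [Finset.mem_union, Finset.mem_sdiff, Finset.mem_insert,
      Finset.mem_singleton] at ha ⊢
    tauto
  have hli' : l ≤ i := (hbd l (by simp)).2
  have hir : i ≠ r := (hlr.trans_le hli').ne'
  have hil : i ≠ l := hli.symm
  have hjr : j ≤ r := (hbd r (by simp)).1
  have hjl : j ≠ l := fun h => absurd (h ▸ hjr) (fun h' => lt_irrefl _ (hlr.trans_le h'))
  have hi' : i = l ∨ i ∈ C ∨ i = r := by have h := hi; simp at h; tauto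
  have hj' : j = l ∨ j ∈ C ∨ j = r := by have h := hj; simp at h; tauto
  have hiU : i ∈ C \ {l, r} ∪ {r} := by
    simp only [Finset.mem_union, Finset.mem_sdiff, Finset.mem_insert, Finset.mem_singleton]
    tauto
  have hjU : j ∈ C \ {l, r} ∪ {r} := by
    simp only [Finset.mem_union, Finset.mem_sdiff, Finset.mem_insert, Finset.mem_singleton]
    tauto
  have hUeq : (C \ {l, r} ∪ {r}) ∪ {l, r} = C ∪ {l, r} := by
    ext a
    simp only [Finset.mem_union, Finset.mem_sdiff, Finset.mem_insert, Finset.mem_singleton]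
    tauto
  refine ⟨⟨⟨⟨r, by simp⟩, fun a ha b hb => hch a (hsub ha) b (hsub hb), hiU, hjU,
      fun c hc => hbd c (hsub hc)⟩, Or.inr (by simp), ?_⟩, ?_⟩
  · rw [hUeq]; exact ⟨hNE, hch, hi, hj, hbd⟩
  · ext a
    simp only [Finset.mem_union, Finset.mem_sdiff, Finset.mem_insert, Finset.mem_singleton]
    tauto

lemma aux_notroute_l (hlr : r < l) (hrj : r = j) (C : Finset P) :
    ¬ IsRoute i j (C \ {l, r} ∪ {l}) := by
  subst hrj
  intro hR
  have hmem := hR.2.2.2.1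
  simp at hmem
  exact absurd hmem.symm hlr.ne'

lemma aux_notroute_r (hlr : r < l) (hli : l = i) (C : Finset P) :
    ¬ IsRoute i j (C \ {l, r} ∪ {r}) := by
  subst hli
  intro hR
  have hmem := hR.2.2.1
  simp at hmem
  exact absurd hmem hlr.ne'

lemma aux_class_subset {C : Finset P} (hlr : r < l) (hC : IsFillable i j l r C) :
    routeClass i j l r C ⊆
      ({C \ {l, r} ∪ {l}, C \ {l, r} ∪ {r}, C \ {l, r} ∪ {l, r}} : Set (Finset P)) := by
  rintro C' ⟨hC', hD⟩
  have hne : l ≠ r := hlr.ne'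
  have key : C' \ {l, r} ∪ C' ∩ {l, r} = C' := Finset.sdiff_union_inter C' {l, r}
  simp only [Set.mem_insert_iff, Set.mem_singleton_iff]
  by_cases hl : l ∈ C' <;> by_cases hr : r ∈ C'
  · right; right
    rw [← key, hD]
    congr 1
    ext a
    simp only [Finset.mem_inter, Finset.mem_insert, Finset.mem_singleton]
    constructor
    · rintro ⟨-, h⟩; exact h
    · rintro (rfl | rfl) <;> simp [hl, hr]
  · left
    rw [← key, hD]
    congr 1
    ext a
    simp only [Finset.mem_inter, Finset.mem_insert, Finset.mem_singleton]
    constructor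
    · rintro ⟨ha, rfl | rfl⟩
      · rfl
      · exact absurd ha hr
    · rintro rfl; exact ⟨hl, Or.inl rfl⟩
  · right; left
    rw [← key, hD]
    congr 1
    ext a
    simp only [Finset.mem_inter, Finset.mem_insert, Finset.mem_singleton]
    constructor
    · rintro ⟨ha, rfl | rfl⟩
      · exact absurd ha hl
      · rfl
    · rintro rfl; exact ⟨hr, Or.inr rfl⟩
  · rcases hC'.2.1 with h | h
    · exact absurd h hl
    · exact absurd h hr

end Aux

section Aux2
variable {P : Type*} [PartialOrder P] [DecidableEq P] {i j l r : P}

lemma aux_ne_lr (hlr : r < l) (C : Finset P) :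
    C \ {l, r} ∪ {l} ≠ C \ {l, r} ∪ {r} := by
  intro h
  have := Finset.ext_iff.mp h l
  simp [hlr.ne'] at this

lemma aux_ne_l_lr (hlr : r < l) (C : Finset P) :
    C \ {l, r} ∪ {l} ≠ C \ {l, r} ∪ {l, r} := by
  intro h
  have := Finset.ext_iff.mp h r
  simp [hlr.ne] at this

lemma aux_ne_r_lr (hlr : r < l) (C : Finset P) :
    C \ {l, r} ∪ {r} ≠ C \ {l, r} ∪ {l, r} := by
  intro h
  have := Finset.ext_iff.mp h l
  simp [hlr.ne'] at this

end Aux2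

/-- Fix `i, j` in a poset `P` and `l, r ∈ P` with `r < l` and no element strictly between.
(1) The relation `C ∼ C' ↔ C \ {l,r} = C' \ {l,r}` on `(l,r)`-fillable routes from `j`
to `i` is an equivalence relation; each class of a fillable route `C` is contained in
`{D ∪ {l}, D ∪ {r}, D ∪ {l,r}}` where `D = C \ {l,r}` and contains `C`, so every route
from `j` to `i` is either not fillable or belongs to exactly one such class.
(2) The class of a fillable route `C` has exactly 3 elements `D∪{l}, D∪{r}, D∪{l,r}`
if `l ≠ i` and `r ≠ j`; exactly 2 elements `D∪{l}, D∪{l,r}` if `l = i ∧ r ≠ j`;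
exactly 2 elements `D∪{r}, D∪{l,r}` if `l ≠ i ∧ r = j`; and exactly 1 element
`D∪{l,r}` if `l = i ∧ r = j`. -/
theorem route_chain_classification
    {P : Type*} [PartialOrder P] [DecidableEq P] (i j l r : P)
    (hlr : r < l) (hcov : ∀ x : P, ¬(r < x ∧ x < l)) :
    (Equivalence (fun C C' : {C : Finset P // IsFillable i j l r C} =>
        C.val \ {l, r} = C'.val \ {l, r})) ∧
    (∀ C : Finset P, IsFillable i j l r C →
        C ∈ routeClass i j l r C ∧
        routeClass i j l r C ⊆
          {C \ {l, r} ∪ {l}, C \ {l, r} ∪ {r}, C \ {l, r} ∪ {l, r}}) ∧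
    (∀ C : Finset P, IsRoute i j C →
        ¬ IsFillable i j l r C ∨
        (C ∈ routeClass i j l r C ∧
          ∀ C' : Finset P, IsFillable i j l r C' → C ∈ routeClass i j l r C' →
            routeClass i j l r C' = routeClass i j l r C)) ∧
    (∀ C : Finset P, IsFillable i j l r C →
      (l ≠ i → r ≠ j →
        routeClass i j l r C
            = {C \ {l, r} ∪ {l}, C \ {l, r} ∪ {r}, C \ {l, r} ∪ {l, r}} ∧
        (routeClass i j l r C).ncard = 3) ∧
      (l = i → r ≠ j →
        routeClass i j l r C = {C \ {l, r} ∪ {l}, C \ {l, r} ∪ {l, r}} ∧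
        (routeClass i j l r C).ncard = 2) ∧
      (l ≠ i → r = j →
        routeClass i j l r C = {C \ {l, r} ∪ {r}, C \ {l, r} ∪ {l, r}} ∧
        (routeClass i j l r C).ncard = 2) ∧
      (l = i → r = j →
        routeClass i j l r C = {C \ {l, r} ∪ {l, r}} ∧
        (routeClass i j l r C).ncard = 1)) := by
  refine ⟨⟨fun _ => rfl, fun h => h.symm, fun h1 h2 => h1.trans h2⟩, ?_, ?_, ?_⟩
  · intro C hC
    exact ⟨⟨hC, rfl⟩, aux_class_subset i j l r hlr hC⟩
  · intro C _hR
    by_cases h : IsFillable i j l r C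
    · right
      refine ⟨⟨h, rfl⟩, fun C' _hC' hmem => ?_⟩
      ext X
      simp only [routeClass, Set.mem_setOf_eq]
      rw [← hmem.2]
    · exact Or.inl h
  · intro C hC
    refine ⟨?_, ?_, ?_, ?_⟩
    · intro hli hrj
      have heq : routeClass i j l r C
          = {C \ {l, r} ∪ {l}, C \ {l, r} ∪ {r}, C \ {l, r} ∪ {l, r}} := by
        apply Set.Subset.antisymm (aux_class_subset i j l r hlr hC)
        rintro X (rfl | rfl | rfl)
        · exact ⟨(aux_fill_l i j l r hlr hC hrj).1, (aux_fill_l i j l r hlr hC hrj).2⟩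
        · exact ⟨(aux_fill_r i j l r hlr hC hli).1, (aux_fill_r i j l r hlr hC hli).2⟩
        · exact ⟨(aux_fill_lr i j l r hC).1, (aux_fill_lr i j l r hC).2⟩
      refine ⟨heq, ?_⟩
      rw [heq]
      exact Set.ncard_eq_three.mpr ⟨_, _, _, aux_ne_lr hlr C, aux_ne_l_lr hlr C,
        aux_ne_r_lr hlr C, rfl⟩
    · intro hli hrj
      have heq : routeClass i j l r C = {C \ {l, r} ∪ {l}, C \ {l, r} ∪ {l, r}} := by
        apply Set.Subset.antisymm
        · intro X hX
          rcases aux_class_subset i j l r hlr hC hX with rfl | rfl | rfl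
          · exact Or.inl rfl
          · exact absurd hX.1.1 (aux_notroute_r i j l r hlr hli C)
          · exact Or.inr rfl
        · rintro X (rfl | rfl)
          · exact ⟨(aux_fill_l i j l r hlr hC hrj).1, (aux_fill_l i j l r hlr hC hrj).2⟩
          · exact ⟨(aux_fill_lr i j l r hC).1, (aux_fill_lr i j l r hC).2⟩
      exact ⟨heq, by rw [heq]; exact Set.ncard_pair (aux_ne_l_lr hlr C)⟩
    · intro hli hrj
      have heq : routeClass i j l r C = {C \ {l, r} ∪ {r}, C \ {l, r} ∪ {l, r}} := by
        apply Set.Subset.antisymm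
        · intro X hX
          rcases aux_class_subset i j l r hlr hC hX with rfl | rfl | rfl
          · exact absurd hX.1.1 (aux_notroute_l i j l r hlr hrj C)
          · exact Or.inl rfl
          · exact Or.inr rfl
        · rintro X (rfl | rfl)
          · exact ⟨(aux_fill_r i j l r hlr hC hli).1, (aux_fill_r i j l r hlr hC hli).2⟩
          · exact ⟨(aux_fill_lr i j l r hC).1, (aux_fill_lr i j l r hC).2⟩
      exact ⟨heq, by rw [heq]; exact Set.ncard_pair (aux_ne_r_lr hlr C)⟩
    · intro hli hrj
      have heq : routeClass i j l r C = {C \ {l, r} ∪ {l, r}} := by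
        apply Set.Subset.antisymm
        · intro X hX
          rcases aux_class_subset i j l r hlr hC hX with rfl | rfl | rfl
          · exact absurd hX.1.1 (aux_notroute_l i j l r hlr hrj C)
          · exact absurd hX.1.1 (aux_notroute_r i j l r hlr hli C)
          · rfl
        · rintro X rfl
          exact ⟨(aux_fill_lr i j l r hC).1, (aux_fill_lr i j l r hC).2⟩
      exact ⟨heq, by rw [heq]; exact Set.ncard_singleton _⟩
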